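/- Let A and B be binary strings (over the alphabet {0,1}), each of length n, and suppose A and B have at least one common abelian factor. Then the length of a longest common abelian factor (LCAF) of A and B equals the largest ℓ with 1 ≤ ℓ ≤ n such that the integer intervals [minOne(A, ℓ), maxOne(A, ℓ)] and [minOne(B, ℓ), maxOne(B, ℓ)] have nonempty intersection, i.e., such that maxOne(B, ℓ) ≥ minOne(A, ℓ) and maxOne(A, ℓ) ≥ minOne(B, ℓ). -/

import Mathlib

/-- `A` and `B` have a common abelian factor of length `ℓ`: there exist factors
`u` of `A` and `v` of `B`, both of length `ℓ`, with equal Parikh vectors. -/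
def HasCommonAbelianFactor (A B : List Bool) (ℓ : ℕ) : Prop :=
  ∃ u v : List Bool, u <:+: A ∧ v <:+: B ∧ u.length = ℓ ∧ v.length = ℓ ∧
    ∀ c : Bool, u.count c = v.count c

/-- The set of numbers of 1's of length-`ℓ` factors of the binary string `S`. -/
def factorOnesCounts (S : List Bool) (ℓ : ℕ) : Set ℕ :=
  {k | ∃ w : List Bool, w <:+: S ∧ w.length = ℓ ∧ w.count true = k}

/-- `minOne S ℓ`: the minimum number of 1's over all length-`ℓ` factors of `S`. -/
noncomputable def minOne (S : List Bool) (ℓ : ℕ) : ℕ := sInf (factorOnesCounts S ℓ)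

/-- `maxOne S ℓ`: the maximum number of 1's over all length-`ℓ` factors of `S`. -/
noncomputable def maxOne (S : List Bool) (ℓ : ℕ) : ℕ := sSup (factorOnesCounts S ℓ)

section Aux

/-- discrete IVT going up -/
lemma ivt_up {f : ℕ → ℕ} (hstep : ∀ i, f (i+1) ≤ f i + 1)
    {i j k : ℕ} (hij : i ≤ j) (h1 : f i ≤ k) (h2 : k ≤ f j) :
    ∃ m, i ≤ m ∧ m ≤ j ∧ f m = k := by
  induction j, hij using Nat.le_induction with
  | base => exact ⟨i, le_rfl, le_rfl, le_antisymm h1 h2⟩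
  | succ j hij ih =>
    by_cases h : k ≤ f j
    · obtain ⟨m, hm1, hm2, hm3⟩ := ih h
      exact ⟨m, hm1, hm2.trans (Nat.le_succ _), hm3⟩
    · refine ⟨j+1, hij.trans (Nat.le_succ _), le_rfl, ?_⟩
      have := hstep j
      omega

/-- discrete IVT going down -/
lemma ivt_down {f : ℕ → ℕ} (hstep : ∀ i, f i ≤ f (i+1) + 1)
    {i j k : ℕ} (hij : i ≤ j) (h1 : k ≤ f i) (h2 : f j ≤ k) :
    ∃ m, i ≤ m ∧ m ≤ j ∧ f m = k := by
  induction j, hij using Nat.le_induction with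
  | base => exact ⟨i, le_rfl, le_rfl, le_antisymm h2 h1⟩
  | succ j hij ih =>
    by_cases h : f j ≤ k
    · obtain ⟨m, hm1, hm2, hm3⟩ := ih h
      exact ⟨m, hm1, hm2.trans (Nat.le_succ _), hm3⟩
    · refine ⟨j+1, hij.trans (Nat.le_succ _), le_rfl, ?_⟩
      have := hstep j
      omega

lemma count_false_add_count_true (l : List Bool) :
    l.count false + l.count true = l.length := by
  induction l with
  | nil => rfl
  | cons b l ih => cases b <;> simp [List.count_cons] <;> omega

lemma window_mem (S : List Bool) (ℓ i : ℕ) (h : i + ℓ ≤ S.length) :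
    ((S.drop i).take ℓ).count true ∈ factorOnesCounts S ℓ := by
  refine ⟨(S.drop i).take ℓ, ((List.take_prefix ℓ _).isInfix).trans
    ((List.drop_suffix i S).isInfix), ?_, rfl⟩
  simp [List.length_take, List.length_drop]
  omega

lemma mem_window (S : List Bool) (ℓ k : ℕ) (hk : k ∈ factorOnesCounts S ℓ) :
    ∃ i, i + ℓ ≤ S.length ∧ ((S.drop i).take ℓ).count true = k := by
  obtain ⟨w, ⟨s, t, hst⟩, hw, hwk⟩ := hk
  refine ⟨s.length, ?_, ?_⟩
  · have := congrArg List.length hst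
    simp at this
    omega
  · have h1 : S.drop s.length = w ++ t := by
      rw [← hst, List.append_assoc, List.drop_left]
    rw [h1, ← hw, List.take_left, hwk]

lemma bddAbove_foc (S : List Bool) (ℓ : ℕ) : BddAbove (factorOnesCounts S ℓ) := by
  refine ⟨ℓ, fun k hk => ?_⟩
  obtain ⟨w, _, hw, hwk⟩ := hk
  rw [← hwk, ← hw]
  exact List.count_le_length

lemma foc_nonempty (S : List Bool) (ℓ : ℕ) (h : ℓ ≤ S.length) :
    (factorOnesCounts S ℓ).Nonempty :=
  ⟨_, window_mem S ℓ 0 (by omega)⟩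

lemma foc_eq_Icc (S : List Bool) (ℓ : ℕ) (h : ℓ ≤ S.length) :
    factorOnesCounts S ℓ = Set.Icc (minOne S ℓ) (maxOne S ℓ) := by
  have hne := foc_nonempty S ℓ h
  have hbdd := bddAbove_foc S ℓ
  set f : ℕ → ℕ := fun i => ((S.drop i).take ℓ).count true with hf
  set c : ℕ → ℕ := fun i => (S.take i).count true with hc
  have key : ∀ i, c i + f i = c (i + ℓ) := by
    intro i
    simp only [hf, hc]
    rw [List.take_add, List.count_append]
  have mono : ∀ i, c i ≤ c (i+1) ∧ c (i+1) ≤ c i + 1 := by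
    intro i
    have e : S.take (i+1) = S.take i ++ S[i]?.toList := List.take_succ
    have h1 : (S[i]?.toList).count true ≤ (S[i]?.toList).length :=
      List.count_le_length
    have h2 : (S[i]?.toList).length ≤ 1 := by cases S[i]? <;> simp
    have h3 : c (i+1) = c i + (S[i]?.toList).count true := by
      show (S.take (i+1)).count true = _
      rw [e, List.count_append]
    omega
  have hstep1 : ∀ i, f (i+1) ≤ f i + 1 := by
    intro i
    have k1 := key i
    have k2 := key (i+1)
    rw [Nat.add_right_comm i 1 ℓ] at k2
    have m1 := mono i
    have m2 := mono (i + ℓ)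
    omega
  have hstep2 : ∀ i, f i ≤ f (i+1) + 1 := by
    intro i
    have k1 := key i
    have k2 := key (i+1)
    rw [Nat.add_right_comm i 1 ℓ] at k2
    have m1 := mono i
    have m2 := mono (i + ℓ)
    omega
  apply le_antisymm
  · intro k hk
    exact ⟨Nat.sInf_le hk, le_csSup hbdd hk⟩
  · intro k hk
    obtain ⟨hk1, hk2⟩ := hk
    have hmin : minOne S ℓ ∈ factorOnesCounts S ℓ := Nat.sInf_mem hne
    have hmax : maxOne S ℓ ∈ factorOnesCounts S ℓ := Nat.sSup_mem hne hbdd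
    obtain ⟨i, hi, hfi⟩ := mem_window S ℓ _ hmin
    obtain ⟨j, hj, hfj⟩ := mem_window S ℓ _ hmax
    have hfi' : f i = minOne S ℓ := hfi
    have hfj' : f j = maxOne S ℓ := hfj
    rcases le_total i j with hij | hij
    · obtain ⟨m, hm1, hm2, hm3⟩ := ivt_up hstep1 (i := i) (j := j) (k := k) hij
        (by rw [hfi']; exact hk1) (by rw [hfj']; exact hk2)
      exact hm3 ▸ window_mem S ℓ m (by omega)
    · obtain ⟨m, hm1, hm2, hm3⟩ := ivt_down hstep2 (i := j) (j := i) (k := k) hij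
        (by rw [hfj']; exact hk2) (by rw [hfi']; exact hk1)
      exact hm3 ▸ window_mem S ℓ m (by omega)

end Aux

/-- If binary strings `A`, `B` of length `n` have at least one common abelian
factor, then the LCAF length (the largest `ℓ` with `1 ≤ ℓ ≤ n` such that a common
abelian factor of length `ℓ` exists) equals the largest `ℓ` with `1 ≤ ℓ ≤ n` such
that the intervals `[minOne A ℓ, maxOne A ℓ]` and `[minOne B ℓ, maxOne B ℓ]`
intersect, i.e. `maxOne B ℓ ≥ minOne A ℓ` and `maxOne A ℓ ≥ minOne B ℓ`. -/
theorem lcaf_eq_greatest_overlap (n : ℕ) (A B : List Bool)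
    (hA : A.length = n) (hB : B.length = n)
    (hex : ∃ ℓ : ℕ, 1 ≤ ℓ ∧ ℓ ≤ n ∧ HasCommonAbelianFactor A B ℓ) :
    sSup {ℓ : ℕ | 1 ≤ ℓ ∧ ℓ ≤ n ∧ HasCommonAbelianFactor A B ℓ} =
      sSup {ℓ : ℕ | 1 ≤ ℓ ∧ ℓ ≤ n ∧
        maxOne B ℓ ≥ minOne A ℓ ∧ maxOne A ℓ ≥ minOne B ℓ} := by
  have hset : {ℓ : ℕ | 1 ≤ ℓ ∧ ℓ ≤ n ∧ HasCommonAbelianFactor A B ℓ} =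
      {ℓ : ℕ | 1 ≤ ℓ ∧ ℓ ≤ n ∧
        maxOne B ℓ ≥ minOne A ℓ ∧ maxOne A ℓ ≥ minOne B ℓ} := by
    ext ℓ
    simp only [Set.mem_setOf_eq]
    constructor
    · rintro ⟨h1, h2, u, v, hu, hv, hlu, hlv, hc⟩
      have hkA : u.count true ∈ factorOnesCounts A ℓ := ⟨u, hu, hlu, rfl⟩
      have hkB : u.count true ∈ factorOnesCounts B ℓ := ⟨v, hv, hlv, (hc true).symm⟩
      exact ⟨h1, h2,
        le_trans (Nat.sInf_le hkA) (le_csSup (bddAbove_foc B ℓ) hkB),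
        le_trans (Nat.sInf_le hkB) (le_csSup (bddAbove_foc A ℓ) hkA)⟩
    · rintro ⟨h1, h2, h3, h4⟩
      refine ⟨h1, h2, ?_⟩
      have hℓA : ℓ ≤ A.length := by omega
      have hℓB : ℓ ≤ B.length := by omega
      have hIA := foc_eq_Icc A ℓ hℓA
      have hIB := foc_eq_Icc B ℓ hℓB
      have hmmA : minOne A ℓ ≤ maxOne A ℓ := by
        obtain ⟨k, hk⟩ := foc_nonempty A ℓ hℓA
        exact le_trans (Nat.sInf_le hk) (le_csSup (bddAbove_foc A ℓ) hk)
      have hmmB : minOne B ℓ ≤ maxOne B ℓ := by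
        obtain ⟨k, hk⟩ := foc_nonempty B ℓ hℓB
        exact le_trans (Nat.sInf_le hk) (le_csSup (bddAbove_foc B ℓ) hk)
      set k := max (minOne A ℓ) (minOne B ℓ) with hk
      have hkA : k ∈ factorOnesCounts A ℓ := by
        rw [hIA]; constructor <;> omega
      have hkB : k ∈ factorOnesCounts B ℓ := by
        rw [hIB]; constructor <;> omega
      obtain ⟨u, hu, hlu, hku⟩ := hkA
      obtain ⟨v, hv, hlv, hkv⟩ := hkB
      refine ⟨u, v, hu, hv, hlu, hlv, ?_⟩
      intro c
      cases c
      · have cu := count_false_add_count_true u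
        have cv := count_false_add_count_true v
        omega
      · rw [hku, hkv]
  rw [hset]
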